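/- A posteriori velocity error bound for saddle-point problems: under the stated assumptions, if e_v, ê_v ∈ V and e_p, ê_p ∈ Q satisfy the error-residual equations a(e_v,u) − b(u,e_p) = ⟨ê_v,u⟩_V for all u ∈ V and b(e_v,q) = ⟨ê_p,q⟩_Q for all q ∈ Q, then ‖e_v‖_V ≤ ‖ê_v‖_V/α + (1 + γ/α)·‖ê_p‖_Q/β. -/

import Mathlib

open scoped RealInnerProductSpace

set_option maxHeartbeats 1000000 in
/-- A posteriori velocity error bound for saddle-point problems. -/
theorem velocity_error_bound
    {V Q : Type*}
    [NormedAddCommGroup V] [InnerProductSpace ℝ V] [CompleteSpace V]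
    [NormedAddCommGroup Q] [InnerProductSpace ℝ Q] [CompleteSpace Q]
    (a : V →ₗ[ℝ] V →ₗ[ℝ] ℝ) (b : V →ₗ[ℝ] Q →ₗ[ℝ] ℝ)
    (γ α γb β : ℝ)
    (ha_bdd : ∀ u v : V, |a u v| ≤ γ * ‖u‖ * ‖v‖)
    (hα : 0 < α)
    (ha_coer : ∀ u : V, α * ‖u‖ ^ 2 ≤ a u u)
    (hb_bdd : ∀ (u : V) (q : Q), |b u q| ≤ γb * ‖u‖ * ‖q‖)
    (hβ : 0 < β)
    (hb_infsup : ∀ q : Q, β * ‖q‖ ≤ sSup {r : ℝ | ∃ u : V, u ≠ 0 ∧ r = b u q / ‖u‖})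
    (ev ehat_v : V) (ep ehat_p : Q)
    (h1 : ∀ u : V, a ev u - b u ep = ⟪ehat_v, u⟫)
    (h2 : ∀ q : Q, b ev q = ⟪ehat_p, q⟫) :
    ‖ev‖ ≤ ‖ehat_v‖ / α + (1 + γ / α) * (‖ehat_p‖ / β) := by
  -- trivial case: V has no nonzero element
  by_cases hV : ∀ u : V, u = 0
  · have hev : ev = 0 := hV ev
    have hehv : ehat_v = 0 := hV ehat_v
    have hinner : ⟪ehat_p, ehat_p⟫ = (0 : ℝ) := by
      rw [← h2 ehat_p, hev]; simp
    have hehp : ehat_p = 0 := inner_self_eq_zero.mp hinner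
    rw [hev, hehv, hehp]
    simp
  push_neg at hV
  obtain ⟨u₀, hu₀⟩ := hV
  -- γ ≥ α > 0
  have hγ : α ≤ γ := by
    have h0 : 0 < ‖u₀‖ := norm_pos_iff.mpr hu₀
    have := (ha_coer u₀).trans ((le_abs_self _).trans (ha_bdd u₀ u₀))
    rw [pow_two] at this
    nlinarith [mul_pos h0 h0]
  have hγ0 : 0 < γ := lt_of_lt_of_le hα hγ
  -- the continuous version of b
  set bL : V →L[ℝ] Q →L[ℝ] ℝ := b.mkContinuous₂ γb (fun u q => by
    simpa [abs_of_nonneg] using hb_bdd u q) with hbL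
  -- Riesz representative map: Bs q ∈ V with ⟪Bs q, u⟫ = b u q
  set Bs : Q →L[ℝ] V :=
    ((InnerProductSpace.toDual ℝ V).symm.toContinuousLinearEquiv :
      (V →L[ℝ] ℝ) ≃L[ℝ] V).toContinuousLinearMap.comp bL.flip with hBs
  have hBs_apply : ∀ (q : Q) (u : V), ⟪Bs q, u⟫ = b u q := by
    intro q u
    simp [hBs, hbL, InnerProductSpace.toDual_symm_apply, LinearMap.mkContinuous₂_apply]
  -- lower bound from inf-sup
  have hBs_low : ∀ q : Q, β * ‖q‖ ≤ ‖Bs q‖ := by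
    intro q
    refine (hb_infsup q).trans (Real.sSup_le ?_ (norm_nonneg _))
    rintro r ⟨u, hu, rfl⟩
    have hun : 0 < ‖u‖ := norm_pos_iff.mpr hu
    rw [div_le_iff₀ hun, ← hBs_apply q u]
    exact real_inner_le_norm _ _
  -- coercive bilinear form on Q
  set c : Q →L[ℝ] Q →L[ℝ] ℝ := ((innerSL ℝ).comp Bs).flip.comp Bs with hc
  have hc_apply : ∀ q r : Q, c q r = ⟪Bs r, Bs q⟫ := by
    intro q r
    simp only [hc]
    rfl
  have hcoer : IsCoercive c := by
    refine ⟨β * β, mul_pos hβ hβ, fun q => ?_⟩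
    have hl := hBs_low q
    have hm : β * ‖q‖ * (β * ‖q‖) ≤ ‖Bs q‖ * ‖Bs q‖ :=
      mul_le_mul hl hl (by positivity) (norm_nonneg _)
    calc β * β * ‖q‖ * ‖q‖ = β * ‖q‖ * (β * ‖q‖) := by ring
      _ ≤ ‖Bs q‖ * ‖Bs q‖ := hm
      _ = ⟪Bs q, Bs q⟫ := (real_inner_self_eq_norm_mul_norm _).symm
      _ = c q q := (hc_apply q q).symm
  -- Lax-Milgram: solve c p₀ r = ⟪ehat_p, r⟫
  set e := hcoer.continuousLinearEquivOfBilin with he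
  set p₀ : Q := e.symm ehat_p with hp₀
  have hsol : ∀ r : Q, c p₀ r = ⟪ehat_p, r⟫ := by
    intro r
    rw [← hcoer.continuousLinearEquivOfBilin_apply p₀ r, hp₀, ← he,
      e.apply_symm_apply]
  set w : V := Bs p₀ with hw
  have hbw : ∀ q : Q, b w q = ⟪ehat_p, q⟫ := by
    intro q
    rw [← hBs_apply q w, hw, ← hc_apply p₀ q, hsol q]
  -- ‖w‖ ≤ ‖ehat_p‖ / β
  have hwnorm : ‖w‖ ≤ ‖ehat_p‖ / β := by
    have hsq : ‖w‖ * ‖w‖ = ⟪ehat_p, p₀⟫ := by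
      rw [← real_inner_self_eq_norm_mul_norm, hw, ← hc_apply p₀ p₀, hsol p₀]
    have hle : ‖w‖ * ‖w‖ ≤ ‖ehat_p‖ * ‖p₀‖ := hsq.trans_le (real_inner_le_norm _ _)
    have h2' : β * ‖p₀‖ ≤ ‖w‖ := by rw [hw]; exact hBs_low p₀
    rcases eq_or_lt_of_le (norm_nonneg w) with h | h
    · rw [← h]; positivity
    · rw [le_div_iff₀ hβ]
      nlinarith [norm_nonneg ehat_p, norm_nonneg p₀]
  -- the divergence-free part z
  set z : V := ev - w with hz
  have hbz : ∀ q : Q, b z q = 0 := by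
    intro q
    rw [hz, map_sub, LinearMap.sub_apply, h2 q, hbw q, sub_self]
  have haz : a ev z = ⟪ehat_v, z⟫ := by
    have := h1 z
    rw [hbz ep] at this
    linarith
  have hzbound : ‖z‖ ≤ (‖ehat_v‖ + γ * ‖w‖) / α := by
    have hcz : α * ‖z‖ ^ 2 ≤ a z z := ha_coer z
    have hsplit : a z z = a ev z - a w z := by
      have hfz : a z = a ev - a w := by rw [hz, map_sub]
      rw [hfz, LinearMap.sub_apply]
    have hub : a z z ≤ ‖ehat_v‖ * ‖z‖ + γ * ‖w‖ * ‖z‖ := by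
      rw [hsplit, haz]
      have h1' : ⟪ehat_v, z⟫ ≤ ‖ehat_v‖ * ‖z‖ := real_inner_le_norm _ _
      have h2' : -(a w z) ≤ γ * ‖w‖ * ‖z‖ := (neg_le_abs _).trans (ha_bdd w z)
      linarith
    rcases eq_or_lt_of_le (norm_nonneg z) with h | h
    · rw [← h]; positivity
    · rw [le_div_iff₀ hα]
      have : α * ‖z‖ * ‖z‖ ≤ (‖ehat_v‖ + γ * ‖w‖) * ‖z‖ := by
        have := hcz.trans hub
        nlinarith
      exact le_of_mul_le_mul_right (by linarith [this]) h
  -- conclude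
  have hev : ev = z + w := by rw [hz]; abel
  have hfinal : ‖ev‖ ≤ ‖z‖ + ‖w‖ := by rw [hev]; exact norm_add_le _ _
  have h1pγ : (0:ℝ) ≤ 1 + γ / α := by positivity
  calc ‖ev‖ ≤ ‖z‖ + ‖w‖ := hfinal
    _ ≤ (‖ehat_v‖ + γ * ‖w‖) / α + ‖w‖ := by linarith
    _ = ‖ehat_v‖ / α + (1 + γ / α) * ‖w‖ := by field_simp; ring
    _ ≤ ‖ehat_v‖ / α + (1 + γ / α) * (‖ehat_p‖ / β) := by
        exact add_le_add le_rfl (mul_le_mul_of_nonneg_left hwnorm h1pγ)
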